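/- Let D be a connected acyclic local tournament with unique topological ordering (v_1, ..., v_n). Then there exists a minimum-size set S of vertices such that D - S is transitive-free and S contains neither v_1 nor v_n. -/

import Mathlib

/-- An arc `(x, y)` is a *transitive arc* if there is a directed path from `x` to `y`
avoiding the arc `(x, y)` itself. -/
def IsTransArc {V : Type*} (A : V → V → Prop) (x y : V) : Prop :=
  A x y ∧ ∃ l : List V, l.Nodup ∧
    l.Chain' (fun a b => A a b ∧ ¬(a = x ∧ b = y)) ∧
    l.head? = some x ∧ l.getLast? = some y

/-- The arc relation of the digraph obtained by deleting the vertex set `X`. -/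
def Del {V : Type*} (A : V → V → Prop) (X : Set V) (a b : V) : Prop :=
  a ∉ X ∧ b ∉ X ∧ A a b

/-- A digraph is transitive-free if it has no transitive arc. -/
def TransitiveFree {V : Type*} (A : V → V → Prop) : Prop :=
  ∀ x y : V, ¬ IsTransArc A x y

/-- A local tournament: a loopless digraph in which, for every vertex `v`, both the
out-neighborhood and the in-neighborhood of `v` induce tournaments. -/
def IsLocalTournament {V : Type*} (A : V → V → Prop) : Prop :=
  (∀ v, ¬ A v v) ∧
  (∀ v x y : V, A v x → A v y → x ≠ y → (A x y ↔ ¬ A y x)) ∧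
  (∀ v x y : V, A x v → A y v → x ≠ y → (A x y ↔ ¬ A y x))

/-- The underlying undirected graph is connected. -/
def UConnected {V : Type*} (A : V → V → Prop) : Prop :=
  ∀ u v : V, Relation.ReflTransGen (fun a b => A a b ∨ A b a) u v

section aux
variable {V : Type*} [Fintype V] (A : V → V → Prop)

lemma ham_aux (σ : Fin (Fintype.card V) ≃ V)
    (htopo : ∀ i j : Fin (Fintype.card V), A (σ i) (σ j) → i < j)
    (huniq : ∀ τ : Fin (Fintype.card V) ≃ V,
      (∀ i j : Fin (Fintype.card V), A (τ i) (τ j) → i < j) → τ = σ)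
    (i : Fin (Fintype.card V)) (h : i.val + 1 < Fintype.card V) :
    A (σ i) (σ ⟨i.val + 1, h⟩) := by
  by_contra hno
  set i' : Fin (Fintype.card V) := ⟨i.val + 1, h⟩ with hi'
  have hne : i ≠ i' := by simp [hi', Fin.ext_iff]
  set τ := (Equiv.swap i i').trans σ with hτ
  have key : ∀ a b : Fin (Fintype.card V), a < b → ¬(a = i ∧ b = i') →
      Equiv.swap i i' a < Equiv.swap i i' b := by
    intro a b hab hnab
    have hv : (i' : Fin (Fintype.card V)).val = i.val + 1 := rfl
    rw [Equiv.swap_apply_def, Equiv.swap_apply_def]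
    split_ifs <;> simp only [Fin.ext_iff, Fin.lt_def, not_and] at hnab hab ⊢ <;>
      simp only [Fin.ext_iff] at * <;> omega
  have hτtopo : ∀ p q, A (τ p) (τ q) → p < q := by
    intro p q hpq
    have h1 : Equiv.swap i i' (Equiv.swap i i' p) < Equiv.swap i i' (Equiv.swap i i' q) := by
      apply key
      · exact htopo _ _ hpq
      · rintro ⟨ha, hb⟩
        apply hno
        have : τ p = σ i := by rw [hτ]; simp [ha]
        have h2 : τ q = σ i' := by rw [hτ]; simp [hb]
        rw [this, h2] at hpq
        exact hpq
    simpa using h1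
  have heq : τ = σ := huniq τ hτtopo
  have : σ i' = σ i := by
    have : τ i = σ i := by rw [heq]
    rw [hτ] at this
    simpa using this
  exact hne (σ.injective this.symm)

lemma down_aux (hLT : IsLocalTournament A) (σ : Fin (Fintype.card V) ≃ V)
    (htopo : ∀ i j : Fin (Fintype.card V), A (σ i) (σ j) → i < j)
    (huniq : ∀ τ : Fin (Fintype.card V) ≃ V,
      (∀ i j : Fin (Fintype.card V), A (τ i) (τ j) → i < j) → τ = σ) :
    ∀ (d : ℕ) (i k j : Fin (Fintype.card V)), j.val - k.val ≤ d →
      A (σ i) (σ j) → i < k → k < j → A (σ i) (σ k) := by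
  intro d
  induction d with
  | zero =>
    intro i k j hd _ _ hkj
    rw [Fin.lt_def] at hkj; omega
  | succ d ih =>
    intro i k j hd hij hik hkj
    rw [Fin.lt_def] at hik hkj
    by_cases hcase : k.val + 1 = j.val
    · have hj : j = ⟨k.val + 1, by omega⟩ := by rw [Fin.ext_iff]; exact hcase.symm
      have hham : A (σ k) (σ j) := by
        rw [hj]; exact ham_aux A σ htopo huniq k (by omega)
      have hne : σ i ≠ σ k := fun hh => by
        have := σ.injective hh; rw [this] at hik; omega
      have h3 := hLT.2.2 (σ j) (σ i) (σ k) hij hham hne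
      exact h3.mpr (fun hk => by have := htopo _ _ hk; rw [Fin.lt_def] at this; omega)
    · have hlt : k.val < j.val - 1 := by omega
      have hj1lt : j.val - 1 < Fintype.card V := by omega
      set j1 : Fin (Fintype.card V) := ⟨j.val - 1, hj1lt⟩ with hj1
      have hham : A (σ j1) (σ j) := by
        have hh : j = ⟨j1.val + 1, by simp [hj1]; omega⟩ := by
          rw [Fin.ext_iff]; simp [hj1]; omega
        rw [hh]; exact ham_aux A σ htopo huniq j1 (by simp [hj1]; omega)
      have hne : σ i ≠ σ j1 := fun hh => by
        have := σ.injective hh; rw [Fin.ext_iff] at this; simp [hj1] at this; omega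
      have hstep : A (σ i) (σ j1) :=
        (hLT.2.2 (σ j) (σ i) (σ j1) hij hham hne).mpr
          (fun hk => by have := htopo _ _ hk; rw [Fin.lt_def] at this; simp [hj1] at this; omega)
      exact ih i k j1 (by simp [hj1]; omega) hstep (by rw [Fin.lt_def]; omega)
        (by rw [Fin.lt_def]; simp [hj1]; omega)

lemma down' (hLT : IsLocalTournament A) (σ : Fin (Fintype.card V) ≃ V)
    (htopo : ∀ i j : Fin (Fintype.card V), A (σ i) (σ j) → i < j)
    (huniq : ∀ τ : Fin (Fintype.card V) ≃ V,
      (∀ i j : Fin (Fintype.card V), A (τ i) (τ j) → i < j) → τ = σ)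
    {i k j : Fin (Fintype.card V)} (hij : A (σ i) (σ j)) (h1 : i < k) (h2 : k < j) :
    A (σ i) (σ k) :=
  down_aux A hLT σ htopo huniq (j.val - k.val) i k j le_rfl hij h1 h2

lemma up' (hLT : IsLocalTournament A) (σ : Fin (Fintype.card V) ≃ V)
    (htopo : ∀ i j : Fin (Fintype.card V), A (σ i) (σ j) → i < j)
    (huniq : ∀ τ : Fin (Fintype.card V) ≃ V,
      (∀ i j : Fin (Fintype.card V), A (τ i) (τ j) → i < j) → τ = σ)
    {i k j : Fin (Fintype.card V)} (hij : A (σ i) (σ j)) (h1 : i < k) (h2 : k < j) :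
    A (σ k) (σ j) := by
  have hik : A (σ i) (σ k) := down' A hLT σ htopo huniq hij h1 h2
  have hne : σ k ≠ σ j := fun hh => absurd (σ.injective hh) (ne_of_lt h2)
  exact (hLT.2.1 (σ i) (σ k) (σ j) hik hij hne).mpr
    (fun hk => absurd (htopo _ _ hk) (not_lt.mpr h2.le))

end aux

section char
variable {V : Type*} [Fintype V] (A : V → V → Prop)

lemma chain_le_aux (σ : Fin (Fintype.card V) ≃ V)
    (htopo : ∀ i j : Fin (Fintype.card V), A (σ i) (σ j) → i < j)
    (r : V → V → Prop) (hr : ∀ a b, r a b → A a b) :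
    ∀ (l : List V) (a : V), List.Chain r a l → ∀ z, (a :: l).getLast? = some z →
      σ.symm a ≤ σ.symm z := by
  intro l
  induction l with
  | nil =>
    intro a _ z hz
    simp at hz
    subst hz; exact le_refl _
  | cons b t ih =>
    intro a hch z hz
    replace hch := List.isChain_cons_cons.mp hch
    have h1 : σ.symm a < σ.symm b := by
      apply htopo
      simpa using hr _ _ hch.1
    have h2 : σ.symm b ≤ σ.symm z := by
      apply ih b hch.2 z
      rw [← hz, List.getLast?_cons_cons]
    exact le_trans h1.le h2

lemma char_aux (hLT : IsLocalTournament A) (σ : Fin (Fintype.card V) ≃ V)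
    (htopo : ∀ i j : Fin (Fintype.card V), A (σ i) (σ j) → i < j)
    (huniq : ∀ τ : Fin (Fintype.card V) ≃ V,
      (∀ i j : Fin (Fintype.card V), A (τ i) (τ j) → i < j) → τ = σ)
    (S : Set V) :
    TransitiveFree (Del A S) ↔
      ∀ i k j : Fin (Fintype.card V), i < k → k < j → A (σ i) (σ j) →
        σ i ∈ S ∨ σ k ∈ S ∨ σ j ∈ S := by
  constructor
  · intro hTF i k j hik hkj hij
    by_contra hcon
    push_neg at hcon
    obtain ⟨h1, h2, h3⟩ := hcon
    apply hTF (σ i) (σ j)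
    have hik' : A (σ i) (σ k) := down' A hLT σ htopo huniq hij hik hkj
    have hkj' : A (σ k) (σ j) := up' A hLT σ htopo huniq hij hik hkj
    have hki : σ k ≠ σ i := fun hh => absurd (σ.injective hh) (ne_of_gt hik)
    have hkj2 : σ k ≠ σ j := fun hh => absurd (σ.injective hh) (ne_of_lt hkj)
    have hij2 : σ i ≠ σ j := fun hh => absurd (σ.injective hh) (ne_of_lt (hik.trans hkj))
    refine ⟨⟨h1, h3, hij⟩, [σ i, σ k, σ j], ?_, ?_, rfl, rfl⟩
    · simp [hki.symm, hkj2, hij2]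
    · refine List.isChain_cons_cons.mpr ⟨⟨⟨h1, h2, hik'⟩, ?_⟩,
        List.isChain_cons_cons.mpr ⟨⟨⟨h2, h3, hkj'⟩, ?_⟩, List.isChain_singleton _⟩⟩
      · rintro ⟨-, hh⟩; exact hkj2 hh
      · rintro ⟨hh, -⟩; exact hki hh
  · intro hP x y hTA
    obtain ⟨⟨hxS, hyS, hxy⟩, l, hnd, hch, hhd, hlast⟩ := hTA
    obtain ⟨t, rfl⟩ : ∃ t, l = x :: t := by
      cases l with
      | nil => simp at hhd
      | cons a t => simp at hhd; exact ⟨t, by rw [hhd]⟩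
    cases t with
    | nil =>
      simp at hlast
      subst hlast
      exact hLT.1 x hxy
    | cons b t' =>
      replace hch := List.isChain_cons_cons.mp hch
      obtain ⟨⟨⟨_, hbS, hxb⟩, hnxb⟩, hch'⟩ := hch
      have hchain : List.Chain (fun a b => Del A S a b ∧ ¬(a = x ∧ b = y)) b t' := hch'
      have hbney : b ≠ y := fun hh => hnxb ⟨rfl, hh⟩
      rw [List.getLast?_cons_cons] at hlast
      have hble : σ.symm b ≤ σ.symm y :=
        chain_le_aux A σ htopo _ (fun a b hab => hab.1.2.2) t' b hchain y hlast
      have hxb' : σ.symm x < σ.symm b := htopo _ _ (by simpa using hxb)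
      have hby : σ.symm b < σ.symm y :=
        lt_of_le_of_ne hble (fun hh => hbney (by simpa using congrArg σ hh))
      have := hP (σ.symm x) (σ.symm b) (σ.symm y) hxb' hby (by simpa using hxy)
      simp only [Equiv.apply_symm_apply] at this
      rcases this with h | h | h
      · exact hxS h
      · exact hbS h
      · exact hyS h
end char

/-- Let `D` be a connected acyclic local tournament with unique topological ordering
`(v_1, ..., v_n)`. Then there is a minimum-size set `S` of vertices with `D - S`
transitive-free containing neither `v_1` nor `v_n`. -/
theorem min_solution_avoiding_endpoints
    {V : Type*} [Fintype V] (A : V → V → Prop)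
    (hLT : IsLocalTournament A) (hconn : UConnected A)
    (hac : Irreflexive (Relation.TransGen A))
    (σ : Fin (Fintype.card V) ≃ V)
    (htopo : ∀ i j : Fin (Fintype.card V), A (σ i) (σ j) → i < j)
    (huniq : ∀ τ : Fin (Fintype.card V) ≃ V,
      (∀ i j : Fin (Fintype.card V), A (τ i) (τ j) → i < j) → τ = σ)
    (hpos : 0 < Fintype.card V) :
    ∃ S : Set V, TransitiveFree (Del A S) ∧
      (∀ S' : Set V, TransitiveFree (Del A S') → S.ncard ≤ S'.ncard) ∧
      σ ⟨0, hpos⟩ ∉ S ∧ σ ⟨Fintype.card V - 1, Nat.sub_lt hpos one_pos⟩ ∉ S := by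
  classical
  set z : Fin (Fintype.card V) := ⟨0, hpos⟩ with hz
  set ln : Fin (Fintype.card V) := ⟨Fintype.card V - 1, Nat.sub_lt hpos one_pos⟩ with hln
  have hchar := char_aux A hLT σ htopo huniq
  set P : Set V → Prop := fun S => ∀ i k j : Fin (Fintype.card V),
    i < k → k < j → A (σ i) (σ j) → σ i ∈ S ∨ σ k ∈ S ∨ σ j ∈ S with hP
  set N : Set ℕ := {c | ∃ S : Set V, P S ∧ S.ncard = c} with hN
  have hNne : N.Nonempty :=
    ⟨(Set.univ : Set V).ncard, Set.univ, fun _ _ _ _ _ _ => Or.inl (Set.mem_univ _), rfl⟩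
  obtain ⟨S0, hS0P, hS0c⟩ := Nat.sInf_mem hNne
  set m := sInf N with hm
  have hmin : ∀ S' : Set V, P S' → m ≤ S'.ncard := fun S' h => Nat.sInf_le ⟨S', h, rfl⟩
  have hzval : z.val = 0 := rfl
  have hlnval : ln.val = Fintype.card V - 1 := rfl
  set M : Set V := {v | v ≠ σ z ∧ v ≠ σ ln} with hM
  have hMP : P M := by
    intro i k j hik hkj hij
    refine Or.inr (Or.inl ⟨fun hh => ?_, fun hh => ?_⟩)
    · have := σ.injective hh
      rw [Fin.ext_iff] at this
      rw [Fin.lt_def] at hik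
      simp [hz] at this
      omega
    · have := σ.injective hh
      rw [Fin.ext_iff] at this
      rw [Fin.lt_def] at hkj
      have hjlt := j.isLt
      simp [hln] at this
      omega
  by_cases hMm : M.ncard ≤ m
  · refine ⟨M, (hchar M).mpr hMP, fun S' hS' => le_trans hMm (hmin S' ((hchar S').mp hS')),
      fun hh => hh.1 rfl, fun hh => hh.2 rfl⟩
  · push_neg at hMm
    -- Step 1 : get rid of σ z
    have step1 : ∃ S1 : Set V, P S1 ∧ S1.ncard ≤ m ∧ σ z ∉ S1 := by
      by_cases h0 : σ z ∈ S0
      · have hnsub : ¬ M ⊆ S0 := fun hsub => by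
          have := Set.ncard_le_ncard hsub (Set.toFinite S0)
          omega
        obtain ⟨v, hvM, hvS⟩ := Set.not_subset.mp hnsub
        set k0 := σ.symm v with hk0
        have hk0S : σ k0 ∉ S0 := by simpa [hk0] using hvS
        have hk0z : 0 < k0.val := by
          rcases Nat.eq_zero_or_pos k0.val with h | h
          case inr => exact h
          · exfalso; apply hvM.1
            rw [← σ.apply_symm_apply v, ← hk0]
            congr 1
            rw [Fin.ext_iff, hzval]; exact h
        set K : Set (Fin (Fintype.card V)) := {k | 0 < k.val ∧ σ k ∉ S0} with hK
        have hKne : K.Nonempty := ⟨k0, hk0z, hk0S⟩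
        obtain ⟨km, hkmK, hkmle⟩ := Set.exists_min_image K id (Set.toFinite K) hKne
        simp only [id_eq] at hkmle
        refine ⟨insert (σ km) (S0 \ {σ z}), ?_, ?_, ?_⟩
        · intro i k j hik hkj hij
          by_contra hcon
          push_neg at hcon
          obtain ⟨h1, h2, h3⟩ := hcon
          have hkS0 : σ k ∉ S0 := by
            intro hh
            apply h2
            refine Set.mem_insert_of_mem _ ⟨hh, ?_⟩
            simp only [Set.mem_singleton_iff]
            intro hh2
            have := σ.injective hh2
            rw [Fin.ext_iff, hzval] at this
            rw [Fin.lt_def] at hik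
            omega
          have hjS0 : σ j ∉ S0 := by
            intro hh
            apply h3
            refine Set.mem_insert_of_mem _ ⟨hh, ?_⟩
            simp only [Set.mem_singleton_iff]
            intro hh2
            have := σ.injective hh2
            rw [Fin.ext_iff, hzval] at this
            rw [Fin.lt_def] at hik hkj
            omega
          have hiS0 : σ i ∈ S0 := by
            rcases hS0P i k j hik hkj hij with h | h | h
            · exact h
            · exact absurd h hkS0
            · exact absurd h hjS0
          have hiz : i = z := by
            by_contra hne
            apply h1
            refine Set.mem_insert_of_mem _ ⟨hiS0, ?_⟩
            simp only [Set.mem_singleton_iff]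
            exact fun hh => hne (σ.injective hh)
          have hkK : k ∈ K := ⟨by rw [hiz, Fin.lt_def, hzval] at hik; exact hik, hkS0⟩
          have hkmk : km < k := by
            rcases lt_or_eq_of_le (hkmle k hkK) with h | h
            · exact h
            · exfalso; apply h2; rw [← h]; exact Set.mem_insert _ _
          have hzkm : z < km := by rw [Fin.lt_def, hzval]; exact hkmK.1
          have harc : A (σ km) (σ j) := by
            apply up' A hLT σ htopo huniq (i := z) (by rw [← hiz]; exact hij) hzkm
              (hkmk.trans hkj)
          rcases hS0P km k j hkmk hkj harc with h | h | h
          · exact hkmK.2 h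
          · exact hkS0 h
          · exact hjS0 h
        · have h1 : (S0 \ {σ z}).ncard = S0.ncard - 1 :=
            Set.ncard_diff_singleton_of_mem h0
          have h2 : 0 < S0.ncard := Set.ncard_pos (Set.toFinite S0) |>.mpr ⟨_, h0⟩
          calc (insert (σ km) (S0 \ {σ z})).ncard ≤ (S0 \ {σ z}).ncard + 1 :=
                Set.ncard_insert_le _ _
            _ ≤ m := by omega
        · intro hh
          rcases Set.mem_insert_iff.mp hh with h | h
          · have := σ.injective h
            rw [Fin.ext_iff, hzval] at this
            have := hkmK.1
            omega
          · exact h.2 rfl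
      · exact ⟨S0, hS0P, le_of_eq hS0c, h0⟩
    obtain ⟨S1, hS1P, hS1c, hS1z⟩ := step1
    -- Step 2 : get rid of σ ln
    by_cases hl : σ ln ∈ S1
    · have hnsub : ¬ M ⊆ S1 := fun hsub => by
        have := Set.ncard_le_ncard hsub (Set.toFinite S1)
        omega
      obtain ⟨v, hvM, hvS⟩ := Set.not_subset.mp hnsub
      set k0 := σ.symm v with hk0
      have hk0S : σ k0 ∉ S1 := by simpa [hk0] using hvS
      have hk0z : 0 < k0.val := by
        rcases Nat.eq_zero_or_pos k0.val with h | h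
        case inr => exact h
        · exfalso; apply hvM.1
          rw [← σ.apply_symm_apply v, ← hk0]
          congr 1
          rw [Fin.ext_iff, hzval]; exact h
      have hk0l : k0.val < Fintype.card V - 1 := by
        have h1 : k0.val ≤ Fintype.card V - 1 := by have := k0.isLt; omega
        rcases lt_or_eq_of_le h1 with h | h
        · exact h
        · exfalso; apply hvM.2
          rw [← σ.apply_symm_apply v, ← hk0]
          congr 1
          rw [Fin.ext_iff, hlnval]; exact h
      set K : Set (Fin (Fintype.card V)) := {k | 0 < k.val ∧ k.val < Fintype.card V - 1 ∧ σ k ∉ S1} with hK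
      have hKne : K.Nonempty := ⟨k0, hk0z, hk0l, hk0S⟩
      obtain ⟨kM, hkMK, hkMle⟩ := Set.exists_max_image K id (Set.toFinite K) hKne
      simp only [id_eq] at hkMle
      refine ⟨insert (σ kM) (S1 \ {σ ln}), ?_, ?_, ?_, ?_⟩
      · rw [hchar]
        intro i k j hik hkj hij
        by_contra hcon
        push_neg at hcon
        obtain ⟨h1, h2, h3⟩ := hcon
        have hjln : j.val ≤ Fintype.card V - 1 := by have := j.isLt; omega
        have hiS1 : σ i ∉ S1 := by
          intro hh
          apply h1
          refine Set.mem_insert_of_mem _ ⟨hh, ?_⟩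
          simp only [Set.mem_singleton_iff]
          intro hh2
          have := σ.injective hh2
          rw [Fin.ext_iff, hlnval] at this
          rw [Fin.lt_def] at hik hkj
          omega
        have hkS1 : σ k ∉ S1 := by
          intro hh
          apply h2
          refine Set.mem_insert_of_mem _ ⟨hh, ?_⟩
          simp only [Set.mem_singleton_iff]
          intro hh2
          have := σ.injective hh2
          rw [Fin.ext_iff, hlnval] at this
          rw [Fin.lt_def] at hkj
          omega
        have hjS1 : σ j ∈ S1 := by
          rcases hS1P i k j hik hkj hij with h | h | h
          · exact absurd h hiS1
          · exact absurd h hkS1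
          · exact h
        have hjl : j = ln := by
          by_contra hne
          apply h3
          refine Set.mem_insert_of_mem _ ⟨hjS1, ?_⟩
          simp only [Set.mem_singleton_iff]
          exact fun hh => hne (σ.injective hh)
        have hkK : k ∈ K := by
          refine ⟨?_, ?_, hkS1⟩
          · rw [Fin.lt_def] at hik; omega
          · rw [hjl, Fin.lt_def, hlnval] at hkj; exact hkj
        have hkkM : k < kM := by
          rcases lt_or_eq_of_le (hkMle k hkK) with h | h
          · exact h
          · exfalso; apply h2; rw [h]; exact Set.mem_insert _ _
        have hkMl : kM < ln := by rw [Fin.lt_def, hlnval]; exact hkMK.2.1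
        have harc : A (σ i) (σ kM) := by
          apply down' A hLT σ htopo huniq (j := ln) (by rw [← hjl]; exact hij)
            (hik.trans hkkM) hkMl
        rcases hS1P i k kM hik hkkM harc with h | h | h
        · exact hiS1 h
        · exact hkS1 h
        · exact hkMK.2.2 h
      · intro S' hS'
        have h1 : (S1 \ {σ ln}).ncard = S1.ncard - 1 :=
          Set.ncard_diff_singleton_of_mem hl
        have h2 : 0 < S1.ncard := Set.ncard_pos (Set.toFinite S1) |>.mpr ⟨_, hl⟩
        have h3 : m ≤ S'.ncard := hmin S' ((hchar S').mp hS')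
        calc (insert (σ kM) (S1 \ {σ ln})).ncard ≤ (S1 \ {σ ln}).ncard + 1 :=
              Set.ncard_insert_le _ _
          _ ≤ S'.ncard := by omega
      · intro hh
        rcases Set.mem_insert_iff.mp hh with h | h
        · have := σ.injective h
          rw [Fin.ext_iff, hzval] at this
          have := hkMK.1
          omega
        · exact hS1z h.1
      · intro hh
        rcases Set.mem_insert_iff.mp hh with h | h
        · have := σ.injective h
          rw [Fin.ext_iff, hlnval] at this
          have := hkMK.2.1
          omega
        · exact h.2 rfl
    · exact ⟨S1, (hchar S1).mpr hS1P, fun S' hS' =>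
        le_trans hS1c (hmin S' ((hchar S').mp hS')), hS1z, hl⟩
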